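/- Let n ≥ 2. The set of matrices X in the boundary of the positive semidefinite cone PSD(n) with rank(X) ≤ n − 2 has H_{d−1}-measure zero, where d = n(n+1)/2 is the dimension of PSD(n); equivalently, the property rank(X) = n−1 holds generically on bd(PSD(n)). -/

import Mathlib

open MeasureTheory Matrix
open scoped ENNReal

section LowRankAuxSection

open Set Submodule Module
open scoped NNReal

namespace LowRankAux

def coef (m : ℕ) (C : Fin 2 → Fin m → ℝ) : (Fin m ⊕ Fin 2) → Fin m → ℝ :=
  Sum.elim (fun k l => if k = l then (1:ℝ) else 0) C

def param (n m : ℕ) (τ : Fin n → Fin m ⊕ Fin 2)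
    (p : (Sym2 (Fin m) → ℝ) × (Fin 2 → Fin m → ℝ)) : Matrix (Fin n) (Fin n) ℝ :=
  Matrix.of fun i j => ∑ k, ∑ l, coef m p.2 (τ i) k * coef m p.2 (τ j) l * p.1 s(k, l)

lemma exists_param {n m : ℕ} (hmn : m + 2 = n) (X : Matrix (Fin n) (Fin n) ℝ)
    (hsymm : Xᵀ = X) (hrank : X.rank ≤ m) :
    ∃ τ p, X = param n m τ p := by
  classical
  have hXsym : ∀ i j, X i j = X j i := by
    intro i j
    conv_lhs => rw [← hsymm]
    exact Matrix.transpose_apply X i j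
  set v : Fin n → (Fin n → ℝ) := fun j i => X i j with hv
  have hvr : Set.range v = Set.range Xᵀ := rfl
  obtain ⟨b, hbsub, hbspan, hbind⟩ := exists_linearIndependent ℝ (Set.range v)
  have hbfin : b.Finite := (Set.finite_range v).subset hbsub
  letI : Fintype b := hbfin.fintype
  have hbcard : b.toFinset.card ≤ m := by
    rw [← finrank_span_set_eq_card hbind, hbspan, hvr]
    change finrank ℝ (span ℝ (Set.range (Matrix.col X))) ≤ m
    rw [← Matrix.rank_eq_finrank_span_cols]
    exact hrank
  have hgex : ∀ w : b, ∃ j, v j = (w : Fin n → ℝ) := fun w => hbsub w.2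
  choose g hg using hgex
  set t0 : Finset (Fin n) := Finset.univ.image g with ht0
  have ht0card : t0.card ≤ m := by
    calc t0.card ≤ Finset.univ.card := Finset.card_image_le
    _ = b.toFinset.card := by simp [Set.toFinset_card]
    _ ≤ m := hbcard
  obtain ⟨t, ht0t, -, htcard⟩ :=
    Finset.exists_subsuperset_card_eq (Finset.subset_univ t0) ht0card
      (by simpa using by omega : m ≤ Finset.univ.card (α := Fin n))
  have htc : tᶜ.card = 2 := by
    rw [Finset.card_compl, htcard]
    simp only [Fintype.card_fin]
    omega
  set e1 := t.equivFinOfCardEq htcard with he1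
  set e2 := tᶜ.equivFinOfCardEq htc with he2
  set e : Fin m → Fin n := fun k => (e1.symm k : Fin n) with he
  set f : Fin 2 → Fin n := fun i => (e2.symm i : Fin n) with hf
  have hee1 : ∀ (i : Fin n) (h : i ∈ t), e (e1 ⟨i, h⟩) = i := by
    intro i h
    simp only [he, Equiv.symm_apply_apply]
  have hff2 : ∀ (i : Fin n) (h : i ∈ tᶜ), f (e2 ⟨i, h⟩) = i := by
    intro i h
    simp only [hf, Equiv.symm_apply_apply]
  have hspan : ∀ i, v i ∈ span ℝ (Set.range fun k => v (e k)) := by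
    intro i
    have h1 : v i ∈ span ℝ b := by
      rw [hbspan]; exact subset_span (Set.mem_range_self i)
    refine span_le.2 ?_ h1
    intro w hw
    have hgw : g ⟨w, hw⟩ ∈ t := ht0t (by simp [ht0])
    have : w = v (e (e1 ⟨g ⟨w, hw⟩, hgw⟩)) := by
      rw [hee1]
      exact (hg ⟨w, hw⟩).symm
    rw [this]
    exact subset_span (Set.mem_range_self _)
  have hco : ∀ i, ∃ c : Fin m → ℝ, ∑ k, c k • v (e k) = v i :=
    fun i => (mem_span_range_iff_exists_fun ℝ).1 (hspan i)
  choose r0 hr0 using hco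
  set r : Fin n → Fin m → ℝ := fun i =>
    if h : i ∈ t then (fun k => if e1 ⟨i, h⟩ = k then 1 else 0) else r0 i with hr
  have hrep : ∀ i, ∑ k, r i k • v (e k) = v i := by
    intro i
    by_cases h : i ∈ t
    · rw [hr]; simp only [dif_pos h]
      rw [show (∑ k, (if e1 ⟨i, h⟩ = k then (1:ℝ) else 0) • v (e k))
          = ∑ k, (if e1 ⟨i, h⟩ = k then v (e k) else 0) from
        Finset.sum_congr rfl fun k _ => by split <;> simp]
      rw [Finset.sum_ite_eq]
      simp [hee1]
    · rw [hr]; simp only [dif_neg h]; exact hr0 i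
  set τ : Fin n → Fin m ⊕ Fin 2 := fun i =>
    if h : i ∈ t then Sum.inl (e1 ⟨i, h⟩) else Sum.inr (e2 ⟨i, Finset.mem_compl.2 h⟩) with hτ
  set C : Fin 2 → Fin m → ℝ := fun i0 => r (f i0) with hC
  set a : Sym2 (Fin m) → ℝ :=
    Sym2.lift ⟨fun k l => X (e k) (e l), fun k l => hXsym (e k) (e l)⟩ with ha
  have hcoef : ∀ i, coef m C (τ i) = r i := by
    intro i
    by_cases h : i ∈ t
    · rw [hτ]; simp only [dif_pos h]
      funext l
      simp only [coef, Sum.elim_inl, hr, dif_pos h]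
    · rw [hτ]; simp only [dif_neg h]
      simp only [coef, Sum.elim_inr, hC]
      rw [hff2]
  refine ⟨τ, ⟨a, C⟩, ?_⟩
  ext i j
  rw [param]
  simp only [Matrix.of_apply, hcoef]
  have key : ∀ u w, v u w = X w u := fun _ _ => rfl
  have step1 : ∀ u, ∑ l, r j l * X u (e l) = X u j := by
    intro u
    have h2 := congrFun (hrep j) u
    simp only [Finset.sum_apply, Pi.smul_apply, smul_eq_mul, key] at h2
    exact h2
  have step2 : ∑ k, r i k * X (e k) j = X i j := by
    have h2 := congrFun (hrep i) j
    simp only [Finset.sum_apply, Pi.smul_apply, smul_eq_mul, key] at h2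
    rw [hXsym i j, ← h2]
    exact Finset.sum_congr rfl fun k _ => by rw [hXsym (e k) j]
  symm
  calc ∑ k, ∑ l, r i k * r j l * a s(k, l)
      = ∑ k, r i k * ∑ l, r j l * X (e k) (e l) := by
        refine Finset.sum_congr rfl fun k _ => ?_
        rw [Finset.mul_sum]
        refine Finset.sum_congr rfl fun l _ => ?_
        rw [ha, Sym2.lift_mk]
        ring
    _ = ∑ k, r i k * X (e k) j := by
        refine Finset.sum_congr rfl fun k _ => ?_
        rw [step1 (e k)]
    _ = X i j := step2

lemma contDiff_param (n m : ℕ) (τ : Fin n → Fin m ⊕ Fin 2) :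
    letI : NormedAddCommGroup (Matrix (Fin n) (Fin n) ℝ) := Matrix.frobeniusNormedAddCommGroup
    letI : NormedSpace ℝ (Matrix (Fin n) (Fin n) ℝ) := Matrix.frobeniusNormedSpace
    ContDiff ℝ 1 (param n m τ) := by
  letI : NormedAddCommGroup (Matrix (Fin n) (Fin n) ℝ) := Matrix.frobeniusNormedAddCommGroup
  letI : NormedSpace ℝ (Matrix (Fin n) (Fin n) ℝ) := Matrix.frobeniusNormedSpace
  let L : ((Fin n) → (Fin n) → ℝ) →ₗ[ℝ] Matrix (Fin n) (Fin n) ℝ :=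
    { toFun := Matrix.of, map_add' := fun _ _ => rfl, map_smul' := fun _ _ => rfl }
  have hc : ∀ (u : Fin m ⊕ Fin 2) (k : Fin m),
      ContDiff ℝ 1 (fun p : (Sym2 (Fin m) → ℝ) × (Fin 2 → Fin m → ℝ) => coef m p.2 u k) := by
    intro u k
    cases u with
    | inl k0 =>
      exact contDiff_const
    | inr i0 =>
      have h2 : ContDiff ℝ 1 (fun p : (Sym2 (Fin m) → ℝ) × (Fin 2 → Fin m → ℝ) => p.2) :=
        contDiff_snd
      have h3 : ContDiff ℝ 1 (fun q : Fin 2 → Fin m → ℝ => q i0) :=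
        (ContinuousLinearMap.proj (R := ℝ) (φ := fun _ : Fin 2 => Fin m → ℝ) i0).contDiff
      have h4 : ContDiff ℝ 1 (fun q : Fin m → ℝ => q k) :=
        (ContinuousLinearMap.proj (R := ℝ) (φ := fun _ : Fin m => ℝ) k).contDiff
      exact h4.comp (h3.comp h2)
  have hF : ContDiff ℝ 1 (fun p : (Sym2 (Fin m) → ℝ) × (Fin 2 → Fin m → ℝ) =>
      (fun i j => ∑ k, ∑ l, coef m p.2 (τ i) k * coef m p.2 (τ j) l * p.1 s(k, l) :
        (Fin n) → (Fin n) → ℝ)) := by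
    apply contDiff_pi.2; intro i
    apply contDiff_pi.2; intro j
    apply ContDiff.sum; intro k _
    apply ContDiff.sum; intro l _
    have h2 : ContDiff ℝ 1 (fun p : (Sym2 (Fin m) → ℝ) × (Fin 2 → Fin m → ℝ) => p.1) :=
      contDiff_fst
    have h5 : ContDiff ℝ 1 (fun q : Sym2 (Fin m) → ℝ => q s(k, l)) :=
      (ContinuousLinearMap.proj (R := ℝ) (φ := fun _ : Sym2 (Fin m) => ℝ) s(k, l)).contDiff
    exact ((hc (τ i) k).mul (hc (τ j) l)).mul (h5.comp h2)
  let L' : ((Fin n) → (Fin n) → ℝ) →L[ℝ] Matrix (Fin n) (Fin n) ℝ :=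
    ⟨L, L.continuous_of_finiteDimensional⟩
  exact L'.contDiff.comp hF

end LowRankAux


end LowRankAuxSection

open scoped NNReal

/-- Matrices of rank at most `n − 2` in the (relative) boundary of the PSD cone
form an `H_{d−1}`-null set, where `d = n(n+1)/2` is the dimension of the PSD
cone; i.e., `rank = n − 1` holds generically on the boundary of `PSD(n)`.
The matrix space carries the Frobenius (trace inner product) norm. -/
theorem low_rank_boundary_psd_negligible (n : ℕ) (hn : 2 ≤ n) :
    letI : NormedAddCommGroup (Matrix (Fin n) (Fin n) ℝ) :=
      Matrix.frobeniusNormedAddCommGroup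
    letI : MeasurableSpace (Matrix (Fin n) (Fin n) ℝ) := borel _
    haveI : @BorelSpace (Matrix (Fin n) (Fin n) ℝ)
      (@UniformSpace.toTopologicalSpace _ PseudoMetricSpace.toUniformSpace) _ := ⟨rfl⟩
    μH[((n * (n + 1) / 2 : ℕ) : ℝ) - 1]
      {X : Matrix (Fin n) (Fin n) ℝ |
        X ∈ intrinsicFrontier ℝ {Y : Matrix (Fin n) (Fin n) ℝ | Y.PosSemidef} ∧
        X.rank ≤ n - 2} = 0 := by
  letI : NormedAddCommGroup (Matrix (Fin n) (Fin n) ℝ) := Matrix.frobeniusNormedAddCommGroup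
  letI : NormedSpace ℝ (Matrix (Fin n) (Fin n) ℝ) := Matrix.frobeniusNormedSpace
  letI : MeasurableSpace (Matrix (Fin n) (Fin n) ℝ) := borel _
  haveI : BorelSpace (Matrix (Fin n) (Fin n) ℝ) := ⟨rfl⟩
  obtain ⟨k, rfl⟩ : ∃ k, n = k + 2 := ⟨n - 2, by omega⟩
  -- the set of symmetric matrices is closed (in the product topology)
  have hclosed : IsClosed {Y : Matrix (Fin (k + 2)) (Fin (k + 2)) ℝ | Yᵀ = Y} :=
    isClosed_eq (Continuous.matrix_transpose continuous_id) continuous_id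
  have hsub : {Y : Matrix (Fin (k + 2)) (Fin (k + 2)) ℝ | Y.PosSemidef}
      ⊆ {Y : Matrix (Fin (k + 2)) (Fin (k + 2)) ℝ | Yᵀ = Y} := by
    intro Y hY
    have h1 := hY.1
    rwa [Matrix.IsHermitian, Matrix.conjTranspose_eq_transpose_of_trivial] at h1
  have hcard : Fintype.card (Sym2 (Fin k)) = (k + 1) * k / 2 := by
    rw [Sym2.card]
    simp [Nat.choose_two_right]
  have hsplit : (k + 2) * ((k + 2) + 1) / 2 = (k + 1) * k / 2 + (2 * k + 3) := by
    have h0 : (k + 2) * ((k + 2) + 1) = (k + 1) * k + (2 * k + 3) * 2 := by ring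
    rw [h0, Nat.add_mul_div_right _ _ (by norm_num : 0 < 2)]
  have key : Fintype.card (Sym2 (Fin k)) + 2 * k < (k + 2) * ((k + 2) + 1) / 2 - 1
      ∧ 1 ≤ (k + 2) * ((k + 2) + 1) / 2 := by
    rw [hcard, hsplit]
    generalize (k + 1) * k / 2 = q
    omega
  have hexp : (((k + 2) * ((k + 2) + 1) / 2 : ℕ) : ℝ) - 1
      = (((((k + 2) * ((k + 2) + 1) / 2 - 1 : ℕ) : ℝ≥0)) : ℝ) := by
    rw [NNReal.coe_natCast, Nat.cast_sub key.2, Nat.cast_one]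
  rw [hexp]
  refine measure_mono_null
      (t := ⋃ τ : Fin (k + 2) → Fin k ⊕ Fin 2, Set.range (LowRankAux.param (k + 2) k τ)) ?_ ?_
  · rintro X ⟨hX, hrank⟩
    have hXc : X ∈ closure {Y : Matrix (Fin (k + 2)) (Fin (k + 2)) ℝ | Y.PosSemidef} :=
      frontier_subset_closure (intrinsicFrontier_subset_frontier hX)
    have hsymm : Xᵀ = X := by
      have h2 : X ∈ closure {Y : Matrix (Fin (k + 2)) (Fin (k + 2)) ℝ | Yᵀ = Y} :=
        closure_mono hsub hXc
      rwa [hclosed.closure_eq] at h2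
    obtain ⟨τ, p, hXeq⟩ :=
      LowRankAux.exists_param rfl X hsymm
        (le_of_le_of_eq hrank (show k + 2 - 2 = k by omega))
    exact Set.mem_iUnion.2 ⟨τ, ⟨p, hXeq.symm⟩⟩
  refine @hausdorffMeasure_of_dimH_lt _ _ _ ⟨rfl⟩ _ _ ?_
  have hbound : ∀ τ : Fin (k + 2) → Fin k ⊕ Fin 2,
      dimH (Set.range (LowRankAux.param (k + 2) k τ))
        ≤ ((Fintype.card (Sym2 (Fin k)) + 2 * k : ℕ) : ℝ≥0∞) := by
    intro τ
    have hcd := LowRankAux.contDiff_param (k + 2) k τ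
    have hd := hcd.dimH_range_le
    have hfr : Module.finrank ℝ ((Sym2 (Fin k) → ℝ) × (Fin 2 → Fin k → ℝ))
        = Fintype.card (Sym2 (Fin k)) + 2 * k := by
      rw [Module.finrank_prod, Module.finrank_fintype_fun_eq_card,
        Module.finrank_pi_fintype]
      simp [Module.finrank_fintype_fun_eq_card, Nat.two_mul]
    rw [hfr] at hd
    exact_mod_cast hd
  calc dimH (⋃ τ : Fin (k + 2) → Fin k ⊕ Fin 2, Set.range (LowRankAux.param (k + 2) k τ))
      = ⨆ τ : Fin (k + 2) → Fin k ⊕ Fin 2, dimH (Set.range (LowRankAux.param (k + 2) k τ)) :=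
        dimH_iUnion _
    _ ≤ ((Fintype.card (Sym2 (Fin k)) + 2 * k : ℕ) : ℝ≥0∞) := iSup_le hbound
    _ < ((((k + 2) * ((k + 2) + 1) / 2 - 1 : ℕ) : ℝ≥0) : ℝ≥0∞) := by
        rw [ENNReal.coe_natCast]
        exact_mod_cast key.1
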